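/- Let B = (d_{ij}) be an n×p matrix with nonnegative entries, let λ_w ≥ 0 and λ_f > 0 with d_{i·} + λ_w > 0 for all i, and set E_λ = D_{w,λ}^{-1/2} B D_{f,λ}^{-1/2} and L_{f,λ} = I_p − E_λ^⊤E_λ. Then the smallest eigenvalue of L_{f,λ} satisfies eigmin(L_{f,λ}) ≥ λ_f / (max_j d_{·j} + λ_f) > 0, and consequently the spectral norm of E_λ satisfies ‖E_λ‖ = √(eigmax(E_λ^⊤E_λ)) ≤ √( max_j d_{·j} / (max_j d_{·j} + λ_f) ) < 1. -/

import Mathlib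

open Matrix BigOperators

/-- Spectral (ℓ2 operator) norm of a real matrix. -/
noncomputable def specNorm {m n : ℕ} (A : Matrix (Fin m) (Fin n) ℝ) : ℝ :=
  ‖LinearMap.toContinuousLinearMap (Matrix.toEuclideanLin A)‖

/-- with `λ_f > 0`, the smallest eigenvalue of the regularized firm
Laplacian `L_{f,λ} = I − E_λ^⊤E_λ` is at least `λ_f/(max_j d_{·j} + λ_f) > 0`, and
`‖E_λ‖ ≤ √(max_j d_{·j}/(max_j d_{·j} + λ_f)) < 1`. -/
theorem stmt_2 (n p : ℕ) (hn : 0 < n) (hp : 0 < p)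
    (B : Matrix (Fin n) (Fin p) ℝ) (hB : ∀ i j, 0 ≤ B i j)
    (lamw lamf : ℝ) (hlamw : 0 ≤ lamw) (hlamf : 0 < lamf)
    (drow : Fin n → ℝ) (hdrow : ∀ i, drow i = ∑ j, B i j)
    (dcol : Fin p → ℝ) (hdcol : ∀ j, dcol j = ∑ i, B i j)
    (hrowpos : ∀ i, 0 < drow i + lamw)
    (Elam : Matrix (Fin n) (Fin p) ℝ)
    (hElam : Elam = Matrix.diagonal (fun i => 1 / Real.sqrt (drow i + lamw)) * B *
      Matrix.diagonal (fun j => 1 / Real.sqrt (dcol j + lamf)))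
    (Lfl : Matrix (Fin p) (Fin p) ℝ) (hLfl : Lfl = 1 - Elamᵀ * Elam)
    (maxd : ℝ) (hmaxd : maxd = Finset.univ.sup' ⟨⟨0, hp⟩, Finset.mem_univ _⟩ dcol) :
    (∀ (μ : ℝ) (x : Fin p → ℝ), x ≠ 0 → Lfl.mulVec x = μ • x →
      lamf / (maxd + lamf) ≤ μ) ∧
    0 < lamf / (maxd + lamf) ∧
    specNorm Elam ≤ Real.sqrt (maxd / (maxd + lamf)) ∧
    Real.sqrt (maxd / (maxd + lamf)) < 1 := by
  -- basic positivity facts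
  have hdcol_nonneg : ∀ j, 0 ≤ dcol j := fun j => by
    rw [hdcol]; exact Finset.sum_nonneg fun i _ => hB i j
  have hdrow_nonneg : ∀ i, 0 ≤ drow i := fun i => by
    rw [hdrow]; exact Finset.sum_nonneg fun j _ => hB i j
  have hcolpos : ∀ j, 0 < dcol j + lamf := fun j => by
    have := hdcol_nonneg j; linarith
  have hmaxd_nonneg : 0 ≤ maxd := by
    rw [hmaxd]
    exact le_trans (hdcol_nonneg ⟨0, hp⟩) (Finset.le_sup' dcol (Finset.mem_univ _))
  have hle_maxd : ∀ j, dcol j ≤ maxd := fun j => by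
    rw [hmaxd]; exact Finset.le_sup' dcol (Finset.mem_univ _)
  have hden : 0 < maxd + lamf := by linarith
  set c : ℝ := maxd / (maxd + lamf) with hc
  have hc_nonneg : 0 ≤ c := div_nonneg hmaxd_nonneg hden.le
  have hc_lt_one : c < 1 := (div_lt_one hden).2 (by linarith)
  -- entries of Elam
  have hE : ∀ i j, Elam i j =
      1 / Real.sqrt (drow i + lamw) * B i j * (1 / Real.sqrt (dcol j + lamf)) := by
    intro i j
    rw [hElam, Matrix.mul_diagonal, Matrix.diagonal_mul]
  -- key quadratic form bound : ‖Elam x‖² ≤ c ‖x‖²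
  have key : ∀ x : Fin p → ℝ,
      ∑ i, (Elam.mulVec x i) ^ 2 ≤ c * ∑ j, (x j) ^ 2 := by
    intro x
    have step1 : ∀ i, (Elam.mulVec x i) ^ 2 ≤
        ∑ j, B i j * (x j) ^ 2 / (dcol j + lamf) := by
      intro i
      have hmv : Elam.mulVec x i =
          ∑ j, Real.sqrt (B i j / (drow i + lamw)) *
            (Real.sqrt (B i j / (dcol j + lamf)) * x j) := by
        simp only [Matrix.mulVec, dotProduct]
        refine Finset.sum_congr rfl fun j _ => ?_
        rw [hE i j, Real.sqrt_div (hB i j), Real.sqrt_div (hB i j)]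
        have h1 : Real.sqrt (B i j) * Real.sqrt (B i j) = B i j :=
          Real.mul_self_sqrt (hB i j)
        have hsa : Real.sqrt (drow i + lamw) ≠ 0 :=
          ne_of_gt (Real.sqrt_pos.2 (hrowpos i))
        have hsb : Real.sqrt (dcol j + lamf) ≠ 0 :=
          ne_of_gt (Real.sqrt_pos.2 (hcolpos j))
        field_simp
        ring_nf
        rw [Real.sq_sqrt (hB i j)]
        ring
      have cs := Finset.sum_mul_sq_le_sq_mul_sq Finset.univ
        (fun j => Real.sqrt (B i j / (drow i + lamw)))
        (fun j => Real.sqrt (B i j / (dcol j + lamf)) * x j)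
      have hf2 : ∑ j, (Real.sqrt (B i j / (drow i + lamw))) ^ 2 ≤ 1 := by
        have : ∀ j, (Real.sqrt (B i j / (drow i + lamw))) ^ 2
            = B i j / (drow i + lamw) := fun j =>
          Real.sq_sqrt (div_nonneg (hB i j) (hrowpos i).le)
        rw [Finset.sum_congr rfl fun j _ => this j, ← Finset.sum_div,
          ← hdrow i, div_le_one (hrowpos i)]
        linarith
      have hg2 : ∑ j, (Real.sqrt (B i j / (dcol j + lamf)) * x j) ^ 2
          = ∑ j, B i j * (x j) ^ 2 / (dcol j + lamf) := by
        refine Finset.sum_congr rfl fun j _ => ?_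
        rw [mul_pow, Real.sq_sqrt (div_nonneg (hB i j) (hcolpos j).le)]
        ring
      have hg_nonneg : 0 ≤ ∑ j, (Real.sqrt (B i j / (dcol j + lamf)) * x j) ^ 2 :=
        Finset.sum_nonneg fun j _ => sq_nonneg _
      calc (Elam.mulVec x i) ^ 2
          = (∑ j, Real.sqrt (B i j / (drow i + lamw)) *
              (Real.sqrt (B i j / (dcol j + lamf)) * x j)) ^ 2 := by rw [hmv]
        _ ≤ (∑ j, (Real.sqrt (B i j / (drow i + lamw))) ^ 2) *
              ∑ j, (Real.sqrt (B i j / (dcol j + lamf)) * x j) ^ 2 := cs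
        _ ≤ 1 * ∑ j, (Real.sqrt (B i j / (dcol j + lamf)) * x j) ^ 2 :=
            mul_le_mul_of_nonneg_right hf2 hg_nonneg
        _ = ∑ j, B i j * (x j) ^ 2 / (dcol j + lamf) := by rw [one_mul, hg2]
    calc ∑ i, (Elam.mulVec x i) ^ 2
        ≤ ∑ i, ∑ j, B i j * (x j) ^ 2 / (dcol j + lamf) :=
          Finset.sum_le_sum fun i _ => step1 i
      _ = ∑ j, dcol j / (dcol j + lamf) * (x j) ^ 2 := by
          rw [Finset.sum_comm]
          refine Finset.sum_congr rfl fun j _ => ?_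
          rw [← Finset.sum_div, ← Finset.sum_mul, ← hdcol j]
          ring
      _ ≤ ∑ j, c * (x j) ^ 2 := by
          refine Finset.sum_le_sum fun j _ => ?_
          refine mul_le_mul_of_nonneg_right ?_ (sq_nonneg _)
          rw [div_le_div_iff₀ (hcolpos j) hden]
          nlinarith [hle_maxd j, hlamf]
      _ = c * ∑ j, (x j) ^ 2 := by rw [← Finset.mul_sum]
  refine ⟨?_, ?_, ?_, ?_⟩
  · -- eigenvalue lower bound
    intro μ x hx hμ
    obtain ⟨j0, hj0⟩ := Function.ne_iff.1 hx
    have hS : 0 < ∑ j, (x j) ^ 2 :=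
      Finset.sum_pos' (fun j _ => sq_nonneg _)
        ⟨j0, Finset.mem_univ _,
          lt_of_le_of_ne (sq_nonneg _) (Ne.symm (pow_ne_zero 2 hj0))⟩
    have hdot : x ⬝ᵥ Lfl.mulVec x =
        (∑ j, (x j) ^ 2) - ∑ i, (Elam.mulVec x i) ^ 2 := by
      rw [hLfl, Matrix.sub_mulVec, Matrix.one_mulVec, dotProduct_sub,
        ← Matrix.mulVec_mulVec, Matrix.dotProduct_mulVec, Matrix.vecMul_transpose]
      simp [dotProduct, pow_two]
    have hdot2 : x ⬝ᵥ Lfl.mulVec x = μ * ∑ j, (x j) ^ 2 := by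
      rw [hμ, dotProduct_smul, smul_eq_mul]
      simp [dotProduct, pow_two, Finset.mul_sum]
    have hineq : (1 - c) * ∑ j, (x j) ^ 2 ≤ μ * ∑ j, (x j) ^ 2 := by
      rw [← hdot2, hdot]
      have := key x
      linarith
    have h1c : 1 - c = lamf / (maxd + lamf) := by
      rw [hc]; field_simp; ring
    have := (mul_le_mul_iff_of_pos_right hS).1 hineq
    linarith [h1c ▸ this]
  · exact div_pos hlamf hden
  · -- spectral norm bound
    refine ContinuousLinearMap.opNorm_le_bound _ (Real.sqrt_nonneg _) fun x => ?_
    have hTx : ‖(LinearMap.toContinuousLinearMap (Matrix.toEuclideanLin Elam)) x‖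
        = Real.sqrt (∑ i, (Elam.mulVec (WithLp.equiv 2 (Fin p → ℝ) x) i) ^ 2) := by
      rw [LinearMap.coe_toContinuousLinearMap', Matrix.toEuclideanLin_apply,
        EuclideanSpace.norm_eq]
      congr 1
      refine Finset.sum_congr rfl fun i _ => ?_
      simp [Real.norm_eq_abs, sq_abs]
    have hxn : ‖x‖ = Real.sqrt (∑ j, ((WithLp.equiv 2 (Fin p → ℝ) x) j) ^ 2) := by
      rw [EuclideanSpace.norm_eq]
      refine congrArg Real.sqrt ?_
      refine Finset.sum_congr rfl fun j _ => ?_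
      simp [Real.norm_eq_abs, sq_abs]
    rw [hTx, hxn, ← Real.sqrt_mul hc_nonneg]
    exact Real.sqrt_le_sqrt (key _)
  · -- strict bound by 1
    calc Real.sqrt c < Real.sqrt 1 := Real.sqrt_lt_sqrt hc_nonneg hc_lt_one
      _ = 1 := Real.sqrt_one
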